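/- Let S be a nonleaf vertex of a dissection tree of G with children S' and S'' and suppose below(S') and below(S'') are dissected by S. For nodes u, v in below(S) and integer i ≥ 1, the minimum weight d_{S,i}(u,v) of an (S,i)-path between u and v in G[below(S)] satisfies the recurrence d_{S,i}(u,v) = min over y ∈ S ∪ {v} of (d_{S,i−1}(u,y) + d_{S,0}(y,v)), where d_{S,0}(u,v) = min{d_{S'}(u,v), d_{S''}(u,v)} for u ≠ v and d_{S,0}(u,u) = 0. -/

import Mathlib

open SimpleGraph

variable {V : Type*}

/-- The weight of a walk: the sum of the weights of its edges. -/
def walkWeight {G : SimpleGraph V} (w : Sym2 V → ℕ) {u v : V} (p : G.Walk u v) : ℕ :=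
  (p.edges.map w).sum

/-- Node sets `V₁` and `V₂` are dissected by `S` in `G` if no node of `V₁ \ S`
is adjacent to a node of `V₂ \ S`. -/
def Dissects (G : SimpleGraph V) (S V₁ V₂ : Set V) : Prop :=
  ∀ a ∈ V₁ \ S, ∀ b ∈ V₂ \ S, ¬ G.Adj a b

/-- The distance in the subgraph of `G` induced by `A`: the minimum weight of a walk
from `u` to `v` whose support lies in `A` (`⊤` if there is none). -/
noncomputable def dIn (G : SimpleGraph V) (w : Sym2 V → ℕ) (A : Set V) (u v : V) : ℕ∞ :=
  sInf {n : ℕ∞ | ∃ p : G.Walk u v, {a | a ∈ p.support} ⊆ A ∧ n = (walkWeight w p : ℕ∞)}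

/-- `SWalk G B₁ B₂ k p`: the walk `p` is an `(S,k)`-path, where `B₁ = below(S')` and
`B₂ = below(S'')` are the two sides of `S`.  An `(S,0)`-path lies entirely in one of
the two sides; an `(S,k)`-path is an `(S,k-1)`-path followed by an `(S,0)`-path. -/
inductive SWalk (G : SimpleGraph V) (B₁ B₂ : Set V) : ℕ → ∀ {u v : V}, G.Walk u v → Prop
  | zero {u v : V} (p : G.Walk u v) :
      ({a | a ∈ p.support} ⊆ B₁ ∨ {a | a ∈ p.support} ⊆ B₂) → SWalk G B₁ B₂ 0 p
  | succ {k : ℕ} {u y v : V} (q : G.Walk u y) (r : G.Walk y v) :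
      SWalk G B₁ B₂ k q → ({a | a ∈ r.support} ⊆ B₁ ∨ {a | a ∈ r.support} ⊆ B₂) →
      SWalk G B₁ B₂ (k + 1) (q.append r)

/-- `d_{S,k}(u,v)`: the minimum weight of an `(S,k)`-path between `u` and `v`. -/
noncomputable def dSk (G : SimpleGraph V) (w : Sym2 V → ℕ) (B₁ B₂ : Set V) (k : ℕ)
    (u v : V) : ℕ∞ :=
  sInf {n : ℕ∞ | ∃ p : G.Walk u v, SWalk G B₁ B₂ k p ∧ n = (walkWeight w p : ℕ∞)}

section Helpers

variable {G : SimpleGraph V} {S B₁ B₂ : Set V}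

lemma walkWeight_append (w : Sym2 V → ℕ) {u y v : V} (p : G.Walk u y) (q : G.Walk y v) :
    walkWeight w (p.append q) = walkWeight w p + walkWeight w q := by
  simp [walkWeight, Walk.edges_append]

lemma swalk_zero_iff {u v : V} {p : G.Walk u v} :
    SWalk G B₁ B₂ 0 p ↔ ({a | a ∈ p.support} ⊆ B₁ ∨ {a | a ∈ p.support} ⊆ B₂) := by
  constructor
  · intro h
    cases h with
    | zero _ h => exact h
  · exact SWalk.zero p

/-- If `B` is one of the two sides, `y ∈ B`, and either the extension walk `s` stays in
`S ∪ {y}`, or it stays in a side, `y ∉ S`, and it contains a vertex `z ∉ S` adjacent to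
`y`, then `s` stays in `B`. -/
lemma side_absorb (hS : S ⊆ B₁ ∩ B₂) (hdis : Dissects G S B₁ B₂) {y t : V}
    (s : G.Walk y t) {B : Set V} (hB : B = B₁ ∨ B = B₂) (hy : y ∈ B)
    (hcase : ({a | a ∈ s.support} ⊆ S ∪ {y}) ∨
      (({a | a ∈ s.support} ⊆ B₁ ∨ {a | a ∈ s.support} ⊆ B₂) ∧ y ∉ S ∧
        ∃ z ∈ s.support, z ∉ S ∧ G.Adj y z)) :
    {a | a ∈ s.support} ⊆ B := by
  rcases hcase with h | ⟨hside, hyS, z, hzs, hzS, hadj⟩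
  · intro a ha
    rcases h ha with haS | hay
    · rcases hB with rfl | rfl
      · exact (hS haS).1
      · exact (hS haS).2
    · rcases hay with rfl
      exact hy
  · rcases hside with hs | hs <;> rcases hB with rfl | rfl
    · exact hs
    · exact absurd hadj.symm (hdis z ⟨hs hzs, hzS⟩ y ⟨hy, hyS⟩)
    · exact absurd hadj (hdis y ⟨hy, hyS⟩ z ⟨hs hzs, hzS⟩)
    · exact hs

lemma side_append (hS : S ⊆ B₁ ∩ B₂) (hdis : Dissects G S B₁ B₂) {u' y t : V}
    {block : G.Walk u' y} (s : G.Walk y t)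
    (hblock : ({a | a ∈ block.support} ⊆ B₁ ∨ {a | a ∈ block.support} ⊆ B₂))
    (hcase : ({a | a ∈ s.support} ⊆ S ∪ {y}) ∨
      (({a | a ∈ s.support} ⊆ B₁ ∨ {a | a ∈ s.support} ⊆ B₂) ∧ y ∉ S ∧
        ∃ z ∈ s.support, z ∉ S ∧ G.Adj y z)) :
    ({a | a ∈ (block.append s).support} ⊆ B₁ ∨
      {a | a ∈ (block.append s).support} ⊆ B₂) := by
  rcases hblock with hb | hb
  · left
    have hs : {a | a ∈ s.support} ⊆ B₁ :=
      side_absorb hS hdis s (Or.inl rfl) (hb (Walk.end_mem_support block)) hcase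
    intro a ha
    rw [Set.mem_setOf_eq, Walk.mem_support_append_iff] at ha
    exact ha.elim (fun h => hb h) (fun h => hs h)
  · right
    have hs : {a | a ∈ s.support} ⊆ B₂ :=
      side_absorb hS hdis s (Or.inr rfl) (hb (Walk.end_mem_support block)) hcase
    intro a ha
    rw [Set.mem_setOf_eq, Walk.mem_support_append_iff] at ha
    exact ha.elim (fun h => hb h) (fun h => hs h)

lemma swalk_extend (hS : S ⊆ B₁ ∩ B₂) (hdis : Dissects G S B₁ B₂)
    {k : ℕ} {u y t : V} {q : G.Walk u y} (hq : SWalk G B₁ B₂ k q) (s : G.Walk y t)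
    (hcase : ({a | a ∈ s.support} ⊆ S ∪ {y}) ∨
      (({a | a ∈ s.support} ⊆ B₁ ∨ {a | a ∈ s.support} ⊆ B₂) ∧ y ∉ S ∧
        ∃ z ∈ s.support, z ∉ S ∧ G.Adj y z)) :
    SWalk G B₁ B₂ k (q.append s) := by
  cases hq with
  | zero p hp =>
    exact SWalk.zero _ (side_append hS hdis s hp hcase)
  | succ q₀ rₗ hq₀ hrl =>
    rw [← Walk.append_assoc]
    exact SWalk.succ q₀ (rₗ.append s) hq₀ (side_append hS hdis s hrl hcase)

/-- Any decomposition of an `(S,k+1)`-walk can be normalized so that the split vertex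
lies in `S ∪ {v}`. -/
lemma swalk_split (hS : S ⊆ B₁ ∩ B₂) (hdis : Dissects G S B₁ B₂) (w : Sym2 V → ℕ)
    {k : ℕ} {u y v : V} (q : G.Walk u y) (r : G.Walk y v)
    (hq : SWalk G B₁ B₂ k q)
    (hr : ({a | a ∈ r.support} ⊆ B₁ ∨ {a | a ∈ r.support} ⊆ B₂)) :
    ∃ (y' : V) (q' : G.Walk u y') (r' : G.Walk y' v), y' ∈ insert v S ∧
      SWalk G B₁ B₂ k q' ∧
      ({a | a ∈ r'.support} ⊆ B₁ ∨ {a | a ∈ r'.support} ⊆ B₂) ∧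
      walkWeight w q' + walkWeight w r' = walkWeight w q + walkWeight w r := by
  by_cases hy : y ∈ insert v S
  · exact ⟨y, q, r, hy, hq, hr, rfl⟩
  · rw [Set.mem_insert_iff] at hy
    push_neg at hy
    obtain ⟨hyv, hyS⟩ := hy
    cases r with
    | nil => exact absurd rfl hyv
    | @cons _ z _ ha r₂ =>
      by_cases hz : z ∈ S
      · refine ⟨z, q.append (Walk.cons ha Walk.nil), r₂, Or.inr hz, ?_, ?_, ?_⟩
        · refine swalk_extend hS hdis hq _ (Or.inl ?_)
          intro a haa
          simp only [Set.mem_setOf_eq, Walk.support_cons, Walk.support_nil,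
            List.mem_cons, List.mem_singleton] at haa
          rcases haa with rfl | rfl | h
          · exact Or.inr rfl
          · exact Or.inl hz
          · exact absurd h (by simp)
        · rcases hr with h | h
          · exact Or.inl fun a haa => h (by simp only [Set.mem_setOf_eq,
              Walk.support_cons, List.mem_cons]; exact Or.inr haa)
          · exact Or.inr fun a haa => h (by simp only [Set.mem_setOf_eq,
              Walk.support_cons, List.mem_cons]; exact Or.inr haa)
        · simp only [walkWeight, Walk.edges_append, Walk.edges_cons, Walk.edges_nil,
            List.map_append, List.map_cons, List.map_nil, List.sum_append,
            List.sum_cons, List.sum_nil]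
          omega
      · have hext : SWalk G B₁ B₂ k (q.append (Walk.cons ha r₂)) := by
          refine swalk_extend hS hdis hq _ (Or.inr ⟨hr, hyS, z, ?_, hz, ha⟩)
          simp [Walk.support_cons]
        have hv : v ∈ (Walk.cons ha r₂).support := Walk.end_mem_support _
        refine ⟨v, q.append (Walk.cons ha r₂), Walk.nil, Set.mem_insert v S, hext, ?_, ?_⟩
        · rcases hr with h | h
          · exact Or.inl fun a haa => by
              simp only [Set.mem_setOf_eq, Walk.support_nil, List.mem_singleton] at haa
              exact haa ▸ h hv
          · exact Or.inr fun a haa => by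
              simp only [Set.mem_setOf_eq, Walk.support_nil, List.mem_singleton] at haa
              exact haa ▸ h hv
        · simp [walkWeight_append, walkWeight]

end Helpers

/-- Let `S` be a nonleaf vertex of a dissection tree of `G` with
children `S'`, `S''`, where `B₁ = below(S')` and `B₂ = below(S'')` are dissected by
`S`.  For nodes `u, v ∈ below(S) = B₁ ∪ B₂` and `i ≥ 1`, the minimum weight
`d_{S,i}(u,v)` of an `(S,i)`-path between `u` and `v` satisfies
`d_{S,i}(u,v) = min_{y ∈ S ∪ {v}} (d_{S,i-1}(u,y) + d_{S,0}(y,v))`, where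
`d_{S,0}(u,v) = min{d_{S'}(u,v), d_{S''}(u,v)}` for `u ≠ v` and `d_{S,0}(u,u) = 0`. -/
theorem dSk_recurrence {V : Type*} (G : SimpleGraph V) (w : Sym2 V → ℕ)
    (S B₁ B₂ : Set V) (hS : S ⊆ B₁ ∩ B₂) (hdis : Dissects G S B₁ B₂) :
    (∀ u ∈ B₁ ∪ B₂, dSk G w B₁ B₂ 0 u u = 0) ∧
    (∀ u v : V, u ≠ v →
      dSk G w B₁ B₂ 0 u v = min (dIn G w B₁ u v) (dIn G w B₂ u v)) ∧
    (∀ i : ℕ, 1 ≤ i → ∀ u ∈ B₁ ∪ B₂, ∀ v ∈ B₁ ∪ B₂,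
      dSk G w B₁ B₂ i u v =
        ⨅ y ∈ insert v S, dSk G w B₁ B₂ (i - 1) u y + dSk G w B₁ B₂ 0 y v) := by
  refine ⟨?_, ?_, ?_⟩
  · -- d_{S,0}(u,u) = 0
    intro u hu
    refine le_antisymm (sInf_le ⟨Walk.nil, SWalk.zero _ ?_, by simp [walkWeight]⟩)
      zero_le
    rcases hu with hu | hu
    · exact Or.inl fun a haa => by
        simp only [Set.mem_setOf_eq, Walk.support_nil, List.mem_singleton] at haa
        exact haa ▸ hu
    · exact Or.inr fun a haa => by
        simp only [Set.mem_setOf_eq, Walk.support_nil, List.mem_singleton] at haa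
        exact haa ▸ hu
  · -- d_{S,0}(u,v) = min (d_{S'} u v) (d_{S''} u v)
    intro u v _
    have hset : {n : ℕ∞ | ∃ p : G.Walk u v, SWalk G B₁ B₂ 0 p ∧
        n = (walkWeight w p : ℕ∞)} =
        {n : ℕ∞ | ∃ p : G.Walk u v, {a | a ∈ p.support} ⊆ B₁ ∧
          n = (walkWeight w p : ℕ∞)} ∪
        {n : ℕ∞ | ∃ p : G.Walk u v, {a | a ∈ p.support} ⊆ B₂ ∧
          n = (walkWeight w p : ℕ∞)} := by
      ext n
      simp only [Set.mem_setOf_eq, Set.mem_union]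
      constructor
      · rintro ⟨p, hp, rfl⟩
        rcases swalk_zero_iff.mp hp with h | h
        · exact Or.inl ⟨p, h, rfl⟩
        · exact Or.inr ⟨p, h, rfl⟩
      · rintro (⟨p, h, rfl⟩ | ⟨p, h, rfl⟩)
        · exact ⟨p, SWalk.zero p (Or.inl h), rfl⟩
        · exact ⟨p, SWalk.zero p (Or.inr h), rfl⟩
    rw [dSk, hset, sInf_union, dIn, dIn]
  · -- the recurrence
    intro i hi u hu v hv
    refine le_antisymm ?_ ?_
    · -- dSk i u v ≤ inf
      refine le_iInf₂ fun y hy => ?_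
      by_cases hA : {n : ℕ∞ | ∃ p : G.Walk u y, SWalk G B₁ B₂ (i - 1) p ∧
          n = (walkWeight w p : ℕ∞)}.Nonempty
      · by_cases hB : {n : ℕ∞ | ∃ p : G.Walk y v, SWalk G B₁ B₂ 0 p ∧
            n = (walkWeight w p : ℕ∞)}.Nonempty
        · obtain ⟨p, hp, hnp⟩ := csInf_mem hA
          obtain ⟨q, hq, hnq⟩ := csInf_mem hB
          have hmem : ((walkWeight w (p.append q) : ℕ) : ℕ∞) ∈
              {n : ℕ∞ | ∃ p : G.Walk u v, SWalk G B₁ B₂ i p ∧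
                n = (walkWeight w p : ℕ∞)} := by
            refine ⟨p.append q, ?_, rfl⟩
            have : i - 1 + 1 = i := by omega
            rw [← this]
            exact SWalk.succ p q hp (swalk_zero_iff.mp hq)
          calc dSk G w B₁ B₂ i u v ≤ ((walkWeight w (p.append q) : ℕ) : ℕ∞) :=
                sInf_le hmem
            _ = dSk G w B₁ B₂ (i - 1) u y + dSk G w B₁ B₂ 0 y v := by
                rw [walkWeight_append, Nat.cast_add, dSk, dSk, ← hnp, ← hnq]
        · have : dSk G w B₁ B₂ 0 y v = ⊤ := by
            rw [dSk, Set.not_nonempty_iff_eq_empty.mp hB, sInf_empty]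
          rw [this, add_top]
          exact le_top
      · have : dSk G w B₁ B₂ (i - 1) u y = ⊤ := by
          rw [dSk, Set.not_nonempty_iff_eq_empty.mp hA, sInf_empty]
        rw [this, top_add]
        exact le_top
    · -- inf ≤ dSk i u v
      refine le_sInf ?_
      rintro n ⟨p, hp, rfl⟩
      obtain ⟨j, rfl⟩ : ∃ j, i = j + 1 := ⟨i - 1, by omega⟩
      cases hp with
      | succ q r hq hr =>
        obtain ⟨y', q', r', hy', hq', hr', hw⟩ := swalk_split hS hdis w q r hq hr
        have h1 : (⨅ y ∈ insert v S,
            dSk G w B₁ B₂ (j + 1 - 1) u y + dSk G w B₁ B₂ 0 y v) ≤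
            dSk G w B₁ B₂ (j + 1 - 1) u y' + dSk G w B₁ B₂ 0 y' v :=
          iInf₂_le y' hy'
        refine h1.trans ?_
        have h2 : dSk G w B₁ B₂ (j + 1 - 1) u y' ≤ ((walkWeight w q' : ℕ) : ℕ∞) := by
          refine sInf_le ⟨q', ?_, rfl⟩
          simpa using hq'
        have h3 : dSk G w B₁ B₂ 0 y' v ≤ ((walkWeight w r' : ℕ) : ℕ∞) :=
          sInf_le ⟨r', SWalk.zero r' hr', rfl⟩
        calc dSk G w B₁ B₂ (j + 1 - 1) u y' + dSk G w B₁ B₂ 0 y' v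
            ≤ ((walkWeight w q' : ℕ) : ℕ∞) + ((walkWeight w r' : ℕ) : ℕ∞) :=
              add_le_add h2 h3
          _ = ((walkWeight w (q.append r) : ℕ) : ℕ∞) := by
              rw [← Nat.cast_add, hw, walkWeight_append]
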